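/- With J as before (first column (−1,…,−1,0)ᵀ, last row (0,1,…,1), diagonal entries p₁,…,pₙ in positions (i, i+1)): if at least two of the pᵢ are zero, then J has a nontrivial kernel; if exactly one pᵢ is zero, then J is invertible. -/

import Mathlib

private def Jm (n : ℕ) (p : Fin n → ℂ) : Matrix (Fin (n + 1)) (Fin (n + 1)) ℂ :=
  Matrix.of fun i j : Fin (n + 1) =>
    if h : (i : ℕ) < n then
      if j = 0 then (-1 : ℂ)
      else if (j : ℕ) = (i : ℕ) + 1 then p ⟨i, h⟩ else 0
    else if j = 0 then 0 else 1

private lemma Jm_row (n : ℕ) (p : Fin n → ℂ) (v : Fin (n + 1) → ℂ) (i : Fin (n + 1))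
    (h : (i : ℕ) < n) :
    (Jm n p).mulVec v i = -(v 0) + p ⟨i, h⟩ * v ⟨(i : ℕ) + 1, by omega⟩ := by
  classical
  set I : Fin (n + 1) := ⟨(i : ℕ) + 1, by omega⟩ with hI
  have hI0 : I ≠ 0 := by
    intro hc
    have h' : (I : ℕ) = 0 := congrArg Fin.val hc
    rw [hI] at h'
    simp at h'
  have key : ∀ j : Fin (n + 1), Jm n p i j * v j =
      (if j = 0 then -(v 0) else 0) + (if j = I then p ⟨i, h⟩ * v I else 0) := by
    intro j
    by_cases hj0 : j = 0
    · subst hj0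
      simp [Jm, h, Ne.symm hI0]
    · by_cases hjI : j = I
      · have : (j : ℕ) = (i : ℕ) + 1 := by rw [hjI]
        subst hjI
        simp [Jm, h, hj0, this]
      · have hne : (j : ℕ) ≠ (i : ℕ) + 1 := by
          intro hc
          exact hjI (Fin.ext (by simpa [hI] using hc))
        simp [Jm, h, hj0, hne, hjI]
  simp only [Matrix.mulVec, dotProduct]
  rw [Finset.sum_congr rfl (fun j _ => key j), Finset.sum_add_distrib,
    Finset.sum_ite_eq', Finset.sum_ite_eq']
  simp

private lemma Jm_last (n : ℕ) (p : Fin n → ℂ) (v : Fin (n + 1) → ℂ) (i : Fin (n + 1))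
    (h : ¬ (i : ℕ) < n) :
    (Jm n p).mulVec v i = (∑ j, v j) - v 0 := by
  classical
  have key : ∀ j : Fin (n + 1), Jm n p i j * v j = v j - (if j = 0 then v j else 0) := by
    intro j
    by_cases hj : j = 0 <;> simp [Jm, h, hj]
  simp only [Matrix.mulVec, dotProduct]
  rw [Finset.sum_congr rfl (fun j _ => key j), Finset.sum_sub_distrib, Finset.sum_ite_eq']
  simp

set_option maxHeartbeats 1000000 in
/-- For the Lagrange Jacobian `J`: if at least two of the `pᵢ` vanish then `J` has a
nontrivial kernel; if exactly one `pᵢ` vanishes then `J` is invertible. -/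
theorem stmt_5 (n : ℕ) (hn : 2 ≤ n) (p : Fin n → ℂ) :
    (((∃ i j : Fin n, i ≠ j ∧ p i = 0 ∧ p j = 0) →
        ∃ v : Fin (n + 1) → ℂ, v ≠ 0 ∧
          (Matrix.of fun i j : Fin (n + 1) =>
              if h : (i : ℕ) < n then
                if j = 0 then (-1 : ℂ)
                else if (j : ℕ) = (i : ℕ) + 1 then p ⟨i, h⟩ else 0
              else if j = 0 then 0 else 1).mulVec v = 0) ∧
      ((∃ i : Fin n, p i = 0 ∧ ∀ j : Fin n, j ≠ i → p j ≠ 0) →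
        IsUnit (Matrix.of fun i j : Fin (n + 1) =>
              if h : (i : ℕ) < n then
                if j = 0 then (-1 : ℂ)
                else if (j : ℕ) = (i : ℕ) + 1 then p ⟨i, h⟩ else 0
              else if j = 0 then 0 else 1).det)) := by
  classical
  constructor
  · rintro ⟨i, j, hij, hpi, hpj⟩
    set I : Fin (n + 1) := ⟨(i : ℕ) + 1, by omega⟩ with hIdef
    set Jj : Fin (n + 1) := ⟨(j : ℕ) + 1, by omega⟩ with hJdef
    have hIJ : I ≠ Jj := by
      intro hc
      have h' : (i : ℕ) + 1 = (j : ℕ) + 1 := congrArg Fin.val hc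
      exact hij (Fin.ext (show (i : ℕ) = (j : ℕ) by omega))
    refine ⟨fun k => if k = I then 1 else if k = Jj then -1 else 0, ?_, ?_⟩
    · intro hv
      have := congrFun hv I
      simp at this
    · show (Jm n p).mulVec _ = 0
      funext k
      set v : Fin (n + 1) → ℂ := fun k => if k = I then 1 else if k = Jj then -1 else 0
        with hvdef
      have hv0 : v 0 = 0 := by
        simp only [hvdef]
        rw [if_neg, if_neg]
        · simp [hJdef, Fin.ext_iff]
        · simp [hIdef, Fin.ext_iff]
      by_cases hk : (k : ℕ) < n
      · rw [Jm_row n p v k hk, hv0]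
        simp only [Pi.zero_apply, neg_zero, zero_add]
        by_cases hki : (⟨(k : ℕ), hk⟩ : Fin n) = i
        · rw [hki, hpi, zero_mul]
        · by_cases hkj : (⟨(k : ℕ), hk⟩ : Fin n) = j
          · rw [hkj, hpj, zero_mul]
          · have h1 : (⟨(k : ℕ) + 1, by omega⟩ : Fin (n + 1)) ≠ I := by
              intro hc
              have h' : (k : ℕ) + 1 = (i : ℕ) + 1 := congrArg Fin.val hc
              exact hki (Fin.ext (show (k : ℕ) = (i : ℕ) by omega))
            have h2 : (⟨(k : ℕ) + 1, by omega⟩ : Fin (n + 1)) ≠ Jj := by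
              intro hc
              have h' : (k : ℕ) + 1 = (j : ℕ) + 1 := congrArg Fin.val hc
              exact hkj (Fin.ext (show (k : ℕ) = (j : ℕ) by omega))
            simp [hvdef, h1, h2]
      · rw [Jm_last n p v k hk, hv0, sub_zero]
        have : ∀ m : Fin (n + 1), v m =
            (if m = I then (1 : ℂ) else 0) + (if m = Jj then -1 else 0) := by
          intro m
          by_cases h1 : m = I
          · subst h1; simp [hvdef, hIJ]
          · by_cases h2 : m = Jj <;> simp [hvdef, h1, h2, Ne.symm hIJ]
        rw [Finset.sum_congr rfl (fun m _ => this m), Finset.sum_add_distrib,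
          Finset.sum_ite_eq', Finset.sum_ite_eq']
        simp
  · rintro ⟨i, hpi, hother⟩
    rw [isUnit_iff_ne_zero]
    rw [show (Matrix.of fun i j : Fin (n + 1) =>
        if h : (i : ℕ) < n then
          if j = 0 then (-1 : ℂ)
          else if (j : ℕ) = (i : ℕ) + 1 then p ⟨i, h⟩ else 0
        else if j = 0 then 0 else 1) = Jm n p from rfl]
    intro hdet
    obtain ⟨v, hv, hmv⟩ := (Matrix.exists_mulVec_eq_zero_iff).2 hdet
    set I : Fin (n + 1) := ⟨(i : ℕ) + 1, by omega⟩ with hIdef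
    have hin : ((i : ℕ) : ℕ) < n := i.isLt
    have hv0 : v 0 = 0 := by
      have h := Jm_row n p v ⟨(i : ℕ), by omega⟩ (by simpa using i.isLt)
      rw [congrFun hmv _] at h
      have hpi' : p ⟨(i : ℕ), by simpa using i.isLt⟩ = 0 := by
        rwa [show (⟨(i : ℕ), by simpa using i.isLt⟩ : Fin n) = i from Fin.ext rfl]
      rw [hpi', zero_mul, add_zero, Pi.zero_apply] at h
      exact neg_eq_zero.mp h.symm
    have hrest : ∀ m : Fin n, m ≠ i → v ⟨(m : ℕ) + 1, by omega⟩ = 0 := by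
      intro m hm
      have h := Jm_row n p v ⟨(m : ℕ), by omega⟩ (by simpa using m.isLt)
      rw [congrFun hmv _] at h
      have hpm : (⟨(m : ℕ), by simpa using m.isLt⟩ : Fin n) = m := Fin.ext rfl
      rw [hpm, hv0, neg_zero, zero_add, Pi.zero_apply] at h
      exact (mul_eq_zero.1 h.symm).resolve_left (hother m hm)
    have hallbutI : ∀ k : Fin (n + 1), k ≠ I → v k = 0 := by
      intro k hk
      by_cases hk0 : k = 0
      · rw [hk0]; exact hv0
      · have hkpos : 0 < (k : ℕ) := by
          rcases Nat.eq_zero_or_pos (k : ℕ) with h | h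
          · exact absurd (Fin.ext h) hk0
          · exact h
        have hklt : (k : ℕ) - 1 < n := by omega
        have hne : (⟨(k : ℕ) - 1, hklt⟩ : Fin n) ≠ i := by
          intro hc
          apply hk
          have h' : (k : ℕ) - 1 = (i : ℕ) := congrArg Fin.val hc
          exact Fin.ext (show (k : ℕ) = (i : ℕ) + 1 by omega)
        have := hrest ⟨(k : ℕ) - 1, hklt⟩ hne
        have hkk : (⟨(k : ℕ) - 1 + 1, by omega⟩ : Fin (n + 1)) = k :=
          Fin.ext (show (k : ℕ) - 1 + 1 = (k : ℕ) by omega)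
        rwa [hkk] at this
    have hsum : ∑ k, v k = 0 := by
      have h := Jm_last n p v (Fin.last n) (by simp)
      rw [congrFun hmv _, hv0, sub_zero, Pi.zero_apply] at h
      exact h.symm
    have hvI : v I = 0 := by
      have : ∑ k, v k = v I := Finset.sum_eq_single I (fun k _ hk => hallbutI k hk)
        (fun h => absurd (Finset.mem_univ I) h)
      rw [← this, hsum]
    apply hv
    funext k
    by_cases hk : k = I
    · rw [hk]; exact hvI
    · exact hallbutI k hk
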